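/- Let A be a connected abelian Lie group, realized as A = Ã/Γ with Ã a finite-dimensional real vector space and Γ a discrete subgroup (a lattice in its real span). Let F̃ be a subgroup of Ã such that F̃ + Γ is discrete and F̃ ∩ Γ = {0}. Then F̃ ∩ span_ℝ(Γ) = {0}; hence F̃ is contained in a linear complement of span_ℝ(Γ) in Ã. -/

import Mathlib

open Submodule Module

/-- For a discrete `ℤ`-submodule `L` of a finite-dimensional real normed space,
the `ℤ`-rank of `L` equals the dimension of its real span. -/
theorem finrank_int_eq_finrank_span_of_discrete
    {E : Type*} [NormedAddCommGroup E] [NormedSpace ℝ E] [FiniteDimensional ℝ E]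
    (L : Submodule ℤ E) [DiscreteTopology L] :
    finrank ℤ L = finrank ℝ (span ℝ (L : Set E)) := by
  let f := (span ℝ (L : Set E)).subtype
  let L₀ := L.comap (f.restrictScalars ℤ)
  have h_img : f '' L₀ = L := by
    rw [← LinearMap.coe_restrictScalars ℤ f, ← Submodule.map_coe (f.restrictScalars ℤ),
      Submodule.map_comap_eq_self]
    exact fun x hx ↦ LinearMap.mem_range.mpr ⟨⟨x, Submodule.subset_span hx⟩, rfl⟩
  have hmap : L₀.map (f.restrictScalars ℤ) = L := SetLike.ext'_iff.mpr h_img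
  have hdisc : DiscreteTopology L₀ := by
    refine DiscreteTopology.preimage_of_continuous_injective (L : Set E) ?_ (injective_subtype _)
    exact LinearMap.continuous_of_finiteDimensional f
  have : IsZLattice ℝ L₀ := ⟨by
    rw [← (Submodule.map_injective_of_injective (injective_subtype _)).eq_iff, Submodule.map_span,
      Submodule.map_top, range_subtype, h_img]⟩
  have h1 : finrank ℤ L₀ = finrank ℝ (span ℝ (L : Set E)) := ZLattice.rank ℝ L₀
  have e : L₀ ≃ₗ[ℤ] L :=
    (Submodule.equivMapOfInjective (f.restrictScalars ℤ) (injective_subtype _) L₀).trans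
      (LinearEquiv.ofEq _ _ hmap)
  rw [← e.finrank_eq, h1]

/-- Let `Ã` be a finite-dimensional real normed space, `Γ` a discrete additive subgroup, and
`F̃` an additive subgroup with `F̃ + Γ` discrete and `F̃ ∩ Γ = {0}`. Then
`F̃ ∩ span_ℝ(Γ) = {0}`, hence `F̃` is contained in a linear complement of `span_ℝ(Γ)`. -/
theorem discrete_subgroup_avoids_span
    (E : Type*) [NormedAddCommGroup E] [NormedSpace ℝ E] [FiniteDimensional ℝ E]
    (Γ F : AddSubgroup E)
    (hΓ : DiscreteTopology Γ)
    (hFΓdisc : DiscreteTopology ↥(F ⊔ Γ))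
    (htriv : F ⊓ Γ = ⊥) :
    (∀ x ∈ F, x ∈ Submodule.span ℝ (Γ : Set E) → x = 0) ∧
    ∃ W : Submodule ℝ E, IsCompl (Submodule.span ℝ (Γ : Set E)) W ∧ (F : Set E) ⊆ W := by
  classical
  set p := AddSubgroup.toIntSubmodule F with hp
  set q := AddSubgroup.toIntSubmodule Γ with hq
  have hpcoe : (p : Set E) = (F : Set E) := AddSubgroup.coe_toIntSubmodule F
  have hqcoe : (q : Set E) = (Γ : Set E) := AddSubgroup.coe_toIntSubmodule Γ
  have hsup : p ⊔ q = AddSubgroup.toIntSubmodule (F ⊔ Γ) :=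
    (SupHomClass.map_sup AddSubgroup.toIntSubmodule F Γ).symm
  have hinf : p ⊓ q = ⊥ := by
    rw [hp, hq, ← AddSubgroup.toIntSubmodule.map_inf, htriv]
    rfl
  -- discreteness of the various subgroups
  have hDsub : ((p ⊔ q : Submodule ℤ E) : Set E) = ((F ⊔ Γ : AddSubgroup E) : Set E) := by
    rw [hsup, AddSubgroup.coe_toIntSubmodule]
  have hD : DiscreteTopology (p ⊔ q : Submodule ℤ E) :=
    DiscreteTopology.of_subset (s := ((F ⊔ Γ : AddSubgroup E) : Set E)) hFΓdisc hDsub.le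
  have hFdisc : DiscreteTopology p :=
    DiscreteTopology.of_subset (s := ((F ⊔ Γ : AddSubgroup E) : Set E)) hFΓdisc
      (by rw [hpcoe]; exact SetLike.coe_subset_coe.mpr le_sup_left)
  have hqdisc : DiscreteTopology q :=
    DiscreteTopology.of_subset (s := ((F ⊔ Γ : AddSubgroup E) : Set E)) hFΓdisc
      (by rw [hqcoe]; exact SetLike.coe_subset_coe.mpr le_sup_right)
  -- rank additivity over ℤ
  have hrk : Module.rank ℤ (p ⊔ q : Submodule ℤ E) = Module.rank ℤ p + Module.rank ℤ q := by
    have := Submodule.rank_sup_add_rank_inf_eq p q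
    rwa [hinf, rank_bot, add_zero] at this
  have hfrk : finrank ℤ (p ⊔ q : Submodule ℤ E) = finrank ℤ p + finrank ℤ q := by
    have h1 : ((finrank ℤ (p ⊔ q : Submodule ℤ E) : Cardinal)) =
        ((finrank ℤ p + finrank ℤ q : ℕ) : Cardinal) := by
      rw [finrank_eq_rank, Nat.cast_add, finrank_eq_rank, finrank_eq_rank, hrk]
    exact_mod_cast h1
  -- span of the sup
  have hspan : span ℝ ((p ⊔ q : Submodule ℤ E) : Set E)
      = span ℝ (p : Set E) ⊔ span ℝ (q : Set E) := by
    apply le_antisymm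
    · rw [span_le]
      intro x hx
      obtain ⟨y, hy, z, hz, rfl⟩ := Submodule.mem_sup.mp hx
      exact Submodule.add_mem _ (Submodule.mem_sup_left (subset_span hy))
        (Submodule.mem_sup_right (subset_span hz))
    · exact sup_le (span_mono (SetLike.coe_subset_coe.mpr le_sup_left))
        (span_mono (SetLike.coe_subset_coe.mpr le_sup_right))
  -- dimension count
  have hdim : finrank ℝ (span ℝ (p : Set E) ⊔ span ℝ (q : Set E) : Submodule ℝ E)
      = finrank ℝ (span ℝ (p : Set E)) + finrank ℝ (span ℝ (q : Set E)) := by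
    rw [← hspan, ← finrank_int_eq_finrank_span_of_discrete (p ⊔ q),
      ← finrank_int_eq_finrank_span_of_discrete p, ← finrank_int_eq_finrank_span_of_discrete q,
      hfrk]
  have hbot : span ℝ (p : Set E) ⊓ span ℝ (q : Set E) = ⊥ := by
    have := Submodule.finrank_sup_add_finrank_inf_eq (span ℝ (p : Set E)) (span ℝ (q : Set E))
    rw [hdim] at this
    have h0 : finrank ℝ (span ℝ (p : Set E) ⊓ span ℝ (q : Set E) : Submodule ℝ E) = 0 := by
      omega
    exact Submodule.finrank_eq_zero.mp h0
  rw [hpcoe, hqcoe] at hbot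
  constructor
  · intro x hxF hxΓ
    have hx : x ∈ span ℝ (F : Set E) ⊓ span ℝ (Γ : Set E) :=
      ⟨subset_span hxF, hxΓ⟩
    rw [hbot] at hx
    exact hx
  · obtain ⟨c, hc⟩ := Submodule.exists_isCompl
      (span ℝ (Γ : Set E) ⊔ span ℝ (F : Set E) : Submodule ℝ E)
    have hdisj : Disjoint (span ℝ (Γ : Set E)) (span ℝ (F : Set E)) := by
      rw [disjoint_iff, inf_comm, hbot]
    refine ⟨span ℝ (F : Set E) ⊔ c, hdisj.isCompl_sup_right_of_isCompl_sup_left hc, ?_⟩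
    intro x hx
    exact Submodule.mem_sup_left (subset_span hx)
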